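/- arXiv:1111.6067 — 4 statements merged into one kernel-verified Lean document; each statement's English description precedes it below -/
import Mathlib

section
/- Fix real constants A, b, c > 0. Define M : [0,1] → ℝ by M(u) = A(b+cu)^{−2} and Δ(u) = ∫_0^u ( −∫_v^1 M(s) ds ) dv for u ∈ [0,1]. Then −∫_0^1 M(v)·Δ(v) dv = ( A²/( c³(b+c) ) )·( c(2b+c)/( b(b+c) ) + 2·log( b/(b+c) ) ). -/
open MeasureTheory Real

/-- Proposition B.3, formula for C₂ = −∫_0^1 M Δ, where Δ(u) = ∫_0^u (−∫_v^1 M)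
and M(u) = A (b + c u)⁻². -/
theorem neg_integral_M_Delta_eq (A b c : ℝ) (hA : 0 < A) (hb : 0 < b) (hc : 0 < c)
    (M : ℝ → ℝ) (hM : ∀ u, M u = A * ((b + c * u) ^ 2)⁻¹)
    (Δ : ℝ → ℝ) (hΔ : ∀ u, Δ u = ∫ v in (0:ℝ)..u, -(∫ s in v..(1:ℝ), M s)) :
    -(∫ v in (0:ℝ)..1, M v * Δ v)
      = (A ^ 2 / (c ^ 3 * (b + c))) *
          (c * (2 * b + c) / (b * (b + c)) + 2 * Real.log (b / (b + c))) := by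
  have hpos : ∀ t : ℝ, 0 ≤ t → 0 < b + c * t := by
    intro t ht
    have : 0 ≤ c * t := mul_nonneg hc.le ht
    linarith
  have hlin : ∀ t : ℝ, HasDerivAt (fun s : ℝ => b + c * s) c t := by
    intro t
    simpa using ((hasDerivAt_id t).const_mul c).const_add b
  -- Step 1: inner integral
  have hinner : ∀ v ∈ Set.Icc (0:ℝ) 1,
      (∫ s in v..(1:ℝ), M s) = A / c * ((b + c * v)⁻¹ - (b + c)⁻¹) := by
    intro v hv
    have hvIcc : Set.uIcc v (1:ℝ) ⊆ Set.Icc (0:ℝ) 1 :=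
      Set.uIcc_subset_Icc hv (by constructor <;> norm_num)
    have hderiv : ∀ t ∈ Set.uIcc v (1:ℝ),
        HasDerivAt (fun s : ℝ => -(A / c) * (b + c * s)⁻¹) (M t) t := by
      intro t ht
      have ht' := hvIcc ht
      have hne : b + c * t ≠ 0 := (hpos t ht'.1).ne'
      have h1 := ((hlin t).inv hne).const_mul (-(A / c))
      convert h1 using 1
      · rfl
      · rfl
      · rfl
      rw [hM]
      field_simp
    have hInt : IntervalIntegrable M volume v 1 := by
      apply ContinuousOn.intervalIntegrable
      intro t ht
      have hne : b + c * t ≠ 0 := (hpos t (hvIcc ht).1).ne'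
      have hMf : M = fun s : ℝ => A * ((b + c * s) ^ 2)⁻¹ := funext hM
      rw [hMf]
      exact (continuousAt_const.mul
        (((continuous_const.add (continuous_const.mul continuous_id)).continuousAt.pow 2).inv₀
          (pow_ne_zero 2 hne))).continuousWithinAt
    rw [intervalIntegral.integral_eq_sub_of_hasDerivAt hderiv hInt]
    have hnev : b + c * v ≠ 0 := (hpos v hv.1).ne'
    have hne1 : b + c ≠ 0 := by positivity
    field_simp
    ring
  -- Step 2: closed form of Δ on [0,1]
  have hΔc : ∀ u ∈ Set.Icc (0:ℝ) 1,
      Δ u = -(A / c) * ((Real.log (b + c * u) - Real.log b) / c - u * (b + c)⁻¹) := by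
    intro u hu
    rw [hΔ]
    have hcongr : ∀ v ∈ Set.uIcc (0:ℝ) u,
        -(∫ s in v..(1:ℝ), M s) = -(A / c * ((b + c * v)⁻¹ - (b + c)⁻¹)) := by
      intro v hv
      have hv' : v ∈ Set.Icc (0:ℝ) 1 :=
        Set.uIcc_subset_Icc (by constructor <;> norm_num) hu hv
      rw [hinner v hv']
    rw [intervalIntegral.integral_congr hcongr]
    have hderiv : ∀ t ∈ Set.uIcc (0:ℝ) u,
        HasDerivAt (fun v : ℝ => -(A / c) * (Real.log (b + c * v) / c - v * (b + c)⁻¹))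
          (-(A / c * ((b + c * t)⁻¹ - (b + c)⁻¹))) t := by
      intro t ht
      have ht' : t ∈ Set.Icc (0:ℝ) 1 :=
        Set.uIcc_subset_Icc (by constructor <;> norm_num) hu ht
      have hne : b + c * t ≠ 0 := (hpos t ht'.1).ne'
      have hlog := (hlin t).log hne
      have ha : HasDerivAt (fun v : ℝ => Real.log (b + c * v) / c) (c * (b + c * t)⁻¹ / c) t := by
        have := hlog.div_const c
        simpa [div_eq_mul_inv] using this
      have hb2 : HasDerivAt (fun v : ℝ => v * (b + c)⁻¹) ((b + c)⁻¹) t := by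
        simpa using (hasDerivAt_id t).mul_const (b + c)⁻¹
      have h1 := HasDerivAt.const_mul (-(A / c)) (ha.sub hb2)
      convert h1 using 1
      · rfl
      · rfl
      · rfl
      field_simp
    have hInt : IntervalIntegrable (fun v : ℝ => -(A / c * ((b + c * v)⁻¹ - (b + c)⁻¹)))
        volume 0 u := by
      apply ContinuousOn.intervalIntegrable
      intro t ht
      have ht' : t ∈ Set.Icc (0:ℝ) 1 :=
        Set.uIcc_subset_Icc (by constructor <;> norm_num) hu ht
      have hne : b + c * t ≠ 0 := (hpos t ht'.1).ne'
      exact (continuousAt_const.mul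
        ((((continuous_const.add (continuous_const.mul continuous_id)).continuousAt).inv₀ hne).sub
          continuousAt_const)).neg.continuousWithinAt
    rw [intervalIntegral.integral_eq_sub_of_hasDerivAt hderiv hInt]
    simp only [mul_zero, add_zero, zero_mul, sub_zero]
    ring
  -- Step 3: main integral
  have hnb : b ≠ 0 := hb.ne'
  have hnbc : b + c ≠ 0 := by positivity
  have key : (∫ v in (0:ℝ)..1, M v * Δ v)
      = -(A ^ 2 / (c ^ 3 * (b + c))) *
          (c * (2 * b + c) / (b * (b + c)) + 2 * (Real.log b - Real.log (b + c))) := by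
    have hcongr : ∀ v ∈ Set.uIcc (0:ℝ) 1, M v * Δ v
        = (A * ((b + c * v) ^ 2)⁻¹) *
            (-(A / c) * ((Real.log (b + c * v) - Real.log b) / c - v * (b + c)⁻¹)) := by
      intro v hv
      have hv' : v ∈ Set.Icc (0:ℝ) 1 := by
        rwa [Set.uIcc_of_le (by norm_num : (0:ℝ) ≤ 1)] at hv
      rw [hM, hΔc v hv']
    rw [intervalIntegral.integral_congr hcongr]
    set H : ℝ → ℝ := fun v =>
      -(A ^ 2 / c) * ((1 / c) * (-(1 / c) * (b + c * v)⁻¹ * (Real.log (b + c * v) + 1))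
        - Real.log b / c * (-(1 / c) * (b + c * v)⁻¹)
        - (1 / (b + c)) * ((1 / c ^ 2) * Real.log (b + c * v) + (b / c ^ 2) * (b + c * v)⁻¹))
      with hH
    have hderiv : ∀ t ∈ Set.uIcc (0:ℝ) 1,
        HasDerivAt H ((A * ((b + c * t) ^ 2)⁻¹) *
            (-(A / c) * ((Real.log (b + c * t) - Real.log b) / c - t * (b + c)⁻¹))) t := by
      intro t ht
      have ht' : t ∈ Set.Icc (0:ℝ) 1 := by
        rwa [Set.uIcc_of_le (by norm_num : (0:ℝ) ≤ 1)] at ht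
      have hne : b + c * t ≠ 0 := (hpos t ht'.1).ne'
      have hw := (hlin t).inv hne
      have hlog := (hlin t).log hne
      have hT1 := (((hw.const_mul (-(1/c))).mul (hlog.add_const 1)).const_mul (1/c))
      have hT2 := ((hw.const_mul (-(1/c))).const_mul (Real.log b / c))
      have hT3 := (((hlog.const_mul (1/c^2)).add (hw.const_mul (b/c^2))).const_mul (1/(b+c)))
      have hfull := ((hT1.sub hT2).sub hT3).const_mul (-(A^2/c))
      convert hfull using 1
      · rfl
      · rfl
      · rfl
      have hne2 : (b + c * t) ^ 2 ≠ 0 := pow_ne_zero 2 hne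
      simp only [Pi.inv_apply]
      field_simp
      ring
    have hInt : IntervalIntegrable (fun v : ℝ => (A * ((b + c * v) ^ 2)⁻¹) *
        (-(A / c) * ((Real.log (b + c * v) - Real.log b) / c - v * (b + c)⁻¹)))
        volume 0 1 := by
      apply ContinuousOn.intervalIntegrable
      intro t ht
      have ht' : t ∈ Set.Icc (0:ℝ) 1 := by
        rwa [Set.uIcc_of_le (by norm_num : (0:ℝ) ≤ 1)] at ht
      have hne : b + c * t ≠ 0 := (hpos t ht'.1).ne'
      have hlc : ContinuousAt (fun s : ℝ => Real.log (b + c * s)) t :=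
        ContinuousAt.log (continuous_const.add (continuous_const.mul continuous_id)).continuousAt hne
      apply ContinuousAt.continuousWithinAt
      apply ContinuousAt.mul
      · exact continuousAt_const.mul
          (((continuous_const.add (continuous_const.mul continuous_id)).continuousAt.pow 2).inv₀
            (pow_ne_zero 2 hne))
      · exact continuousAt_const.mul
          (((hlc.sub continuousAt_const).div_const c).sub (continuousAt_id.mul continuousAt_const))
    rw [intervalIntegral.integral_eq_sub_of_hasDerivAt hderiv hInt, hH]
    have h1 : b + c * 1 = b + c := by ring
    have h0 : b + c * 0 = b := by ring
    simp only [h1, h0]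
    field_simp
    ring
  rw [key, Real.log_div hnb hnbc]
  ring
end

section
/- Fix real constants b > 0 and c₁ > 0. For τ > 0 set c := c₁τ and A := 2c₁τ², define M_τ(u) = A(b+cu)^{−2} on [0,1], Δ_τ(u) = ∫_0^u ( −∫_v^1 M_τ(s) ds ) dv, Γ_τ(u) = ∫_0^u ( −2∫_v^1 M_τ(s)Δ_τ(s) ds ) dv, and A₂(τ) := Γ_τ(1)/2. Then lim_{τ → 0⁺} A₂(τ)/τ⁴ = 5c₁²/(6b⁴). -/
open MeasureTheory Real Filter Topology

/-- The weight `M_τ(u) = A (b + c u)⁻²` with `c = c₁ τ`, `A = 2 c₁ τ²`. -/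
noncomputable def Mwt (b c₁ τ u : ℝ) : ℝ := (2 * c₁ * τ ^ 2) * ((b + c₁ * τ * u) ^ 2)⁻¹

/-- `Δ_τ(u) = ∫_0^u (−∫_v^1 M_τ)`. -/
noncomputable def DeltaFn (b c₁ τ u : ℝ) : ℝ :=
  ∫ v in (0:ℝ)..u, -(∫ s in v..(1:ℝ), Mwt b c₁ τ s)

/-- `Γ_τ(u) = ∫_0^u (−2∫_v^1 M_τ Δ_τ)`. -/
noncomputable def GammaFn (b c₁ τ u : ℝ) : ℝ :=
  ∫ v in (0:ℝ)..u, (-2 * ∫ s in v..(1:ℝ), Mwt b c₁ τ s * DeltaFn b c₁ τ s)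

/-- Rescaled weight, truncated so as to be globally continuous. -/
noncomputable def Ms (b c₁ τ s : ℝ) : ℝ := 2 * c₁ * ((max (b/2) (b + c₁ * τ * s)) ^ 2)⁻¹

noncomputable def Ds (b c₁ τ u : ℝ) : ℝ :=
  ∫ v in (0:ℝ)..u, -(∫ s in v..(1:ℝ), Ms b c₁ τ s)

noncomputable def Hfun (b c₁ τ : ℝ) : ℝ :=
  ∫ v in (0:ℝ)..(1:ℝ), (-2 * ∫ s in v..(1:ℝ), Ms b c₁ τ s * Ds b c₁ τ s)

lemma poly_int (a₀ a₁ a₂ a₃ x y : ℝ) :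
    (∫ v in x..y, (a₀ + a₁*v + a₂*v^2 + a₃*v^3)) =
      (a₀*y + a₁/2*y^2 + a₂/3*y^3 + a₃/4*y^4) - (a₀*x + a₁/2*x^2 + a₂/3*x^3 + a₃/4*x^4) := by
  have h : ∀ v : ℝ, HasDerivAt (fun v => a₀*v + a₁/2*v^2 + a₂/3*v^3 + a₃/4*v^4)
      (a₀ + a₁*v + a₂*v^2 + a₃*v^3) v := by
    intro v
    have h1 : HasDerivAt (fun x : ℝ => x) 1 v := hasDerivAt_id' v
    have := (((h1.const_mul a₀).add ((hasDerivAt_pow 2 v).const_mul (a₁/2))).add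
      ((hasDerivAt_pow 3 v).const_mul (a₂/3))).add ((hasDerivAt_pow 4 v).const_mul (a₃/4))
    refine this.congr_deriv ?_
    push_cast
    ring
  exact intervalIntegral.integral_eq_sub_of_hasDerivAt (fun v _ => h v)
    (((by fun_prop : Continuous fun v:ℝ => a₀ + a₁*v + a₂*v^2 + a₃*v^3)).intervalIntegrable
      (μ := MeasureTheory.volume) x y)

section main

variable {b c₁ : ℝ}

lemma Mwt_eq (hτ : (0:ℝ) < τ) (hc₁ : 0 < c₁) (hb : 0 < b) {s : ℝ} (hs : 0 ≤ s) :
    Mwt b c₁ τ s = τ^2 * Ms b c₁ τ s := by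
  unfold Mwt Ms
  have hpos : 0 ≤ c₁ * τ * s := mul_nonneg (mul_nonneg hc₁.le hτ.le) hs
  rw [max_eq_right (by linarith : b/2 ≤ b + c₁ * τ * s)]
  ring

lemma inner_eq (hτ : (0:ℝ) < τ) (hc₁ : 0 < c₁) (hb : 0 < b) {v : ℝ} (hv : 0 ≤ v) :
    (∫ s in v..(1:ℝ), Mwt b c₁ τ s) = τ^2 * ∫ s in v..(1:ℝ), Ms b c₁ τ s := by
  rw [← intervalIntegral.integral_const_mul]
  apply intervalIntegral.integral_congr
  intro s hs
  have hs0 : 0 ≤ s := by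
    rcases le_total v 1 with h | h
    · rw [Set.uIcc_of_le h] at hs; exact le_trans hv hs.1
    · rw [Set.uIcc_of_ge h] at hs; exact le_trans zero_le_one hs.1
  exact Mwt_eq hτ hc₁ hb hs0

lemma Delta_eq (hτ : (0:ℝ) < τ) (hc₁ : 0 < c₁) (hb : 0 < b) {u : ℝ} (hu : 0 ≤ u) :
    DeltaFn b c₁ τ u = τ^2 * Ds b c₁ τ u := by
  unfold DeltaFn Ds
  rw [← intervalIntegral.integral_const_mul]
  apply intervalIntegral.integral_congr
  intro v hv
  have hv0 : 0 ≤ v := by rw [Set.uIcc_of_le hu] at hv; exact hv.1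
  simp only [inner_eq hτ hc₁ hb hv0]
  ring

lemma Gamma_eq (hτ : (0:ℝ) < τ) (hc₁ : 0 < c₁) (hb : 0 < b) :
    GammaFn b c₁ τ 1 = τ^4 * Hfun b c₁ τ := by
  unfold GammaFn Hfun
  rw [← intervalIntegral.integral_const_mul]
  apply intervalIntegral.integral_congr
  intro v hv
  have hv0 : 0 ≤ v := by rw [Set.uIcc_of_le zero_le_one] at hv; exact hv.1
  have : (∫ s in v..(1:ℝ), Mwt b c₁ τ s * DeltaFn b c₁ τ s)
      = τ^4 * ∫ s in v..(1:ℝ), Ms b c₁ τ s * Ds b c₁ τ s := by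
    rw [← intervalIntegral.integral_const_mul]
    apply intervalIntegral.integral_congr
    intro s hs
    have hs0 : 0 ≤ s := by
      rcases le_total v 1 with h | h
      · rw [Set.uIcc_of_le h] at hs; exact le_trans hv0 hs.1
      · rw [Set.uIcc_of_ge h] at hs; exact le_trans zero_le_one hs.1
    dsimp only
    rw [Mwt_eq hτ hc₁ hb hs0, Delta_eq hτ hc₁ hb hs0]
    ring
  simp only [this]
  ring

lemma Ms_cont (hb : 0 < b) : Continuous (fun p : ℝ × ℝ => Ms b c₁ p.1 p.2) := by
  apply continuous_const.mul
  apply Continuous.inv₀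
  · fun_prop
  · intro p
    apply pow_ne_zero
    exact ne_of_gt (lt_of_lt_of_le (half_pos hb) (le_max_left _ _))

lemma Ds_cont (hb : 0 < b) : Continuous (fun p : ℝ × ℝ => Ds b c₁ p.1 p.2) := by
  have L2 : Continuous fun r : ℝ × ℝ => ∫ t in (1:ℝ)..r.2, Ms b c₁ r.1 t :=
    intervalIntegral.continuous_parametric_primitive_of_continuous
      (μ := MeasureTheory.volume) (f := fun τ s => Ms b c₁ τ s) (by exact Ms_cont hb)
  have hc : Continuous (fun q : (ℝ × ℝ) × ℝ => (q.1.1, q.2)) := by fun_prop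
  have heq : (fun q : (ℝ × ℝ) × ℝ => ∫ s in (1:ℝ)..q.2, Ms b c₁ q.1.1 s)
      = (fun r : ℝ × ℝ => ∫ t in (1:ℝ)..r.2, Ms b c₁ r.1 t) ∘ (fun q => (q.1.1, q.2)) := by
    funext q; rfl
  have L2' : Continuous fun q : (ℝ × ℝ) × ℝ => ∫ s in (1:ℝ)..q.2, Ms b c₁ q.1.1 s := by
    rw [heq]; exact L2.comp hc
  have hun : Continuous (Function.uncurry
      (fun (p : ℝ × ℝ) v => -(∫ s in v..(1:ℝ), Ms b c₁ p.1 s))) := by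
    have hequ : Function.uncurry (fun (p : ℝ × ℝ) v => -(∫ s in v..(1:ℝ), Ms b c₁ p.1 s))
        = fun q : (ℝ × ℝ) × ℝ => -(∫ s in q.2..(1:ℝ), Ms b c₁ q.1.1 s) := by
      funext q; rfl
    have hfun : (fun q : (ℝ × ℝ) × ℝ => ∫ s in (1:ℝ)..q.2, Ms b c₁ q.1.1 s)
        = fun q : (ℝ × ℝ) × ℝ => -(∫ s in q.2..(1:ℝ), Ms b c₁ q.1.1 s) := by
      funext q; exact intervalIntegral.integral_symm _ _
    rw [hequ, ← hfun]
    exact L2'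
  have key := intervalIntegral.continuous_parametric_intervalIntegral_of_continuous
    (μ := MeasureTheory.volume) (a₀ := (0:ℝ))
    (f := fun (p : ℝ × ℝ) v => -(∫ s in v..(1:ℝ), Ms b c₁ p.1 s))
    hun continuous_snd
  have heq2 : (fun p : ℝ × ℝ => Ds b c₁ p.1 p.2)
      = fun x : ℝ × ℝ => ∫ t in (0:ℝ)..(Prod.snd x),
          (fun (p : ℝ × ℝ) v => -(∫ s in v..(1:ℝ), Ms b c₁ p.1 s)) x t := by
    funext p; rfl
  rw [heq2]; exact key

lemma Hfun_cont (hb : 0 < b) : Continuous (fun τ : ℝ => Hfun b c₁ τ) := by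
  have L4 : Continuous fun p : ℝ × ℝ =>
      ∫ s in (1:ℝ)..p.2, Ms b c₁ p.1 s * Ds b c₁ p.1 s :=
    intervalIntegral.continuous_parametric_primitive_of_continuous
      (μ := MeasureTheory.volume) (f := fun τ s => Ms b c₁ τ s * Ds b c₁ τ s)
      (by exact (Ms_cont hb).mul (Ds_cont hb))
  have L4' : Continuous fun q : ℝ × ℝ =>
      (2:ℝ) * ∫ s in (1:ℝ)..q.2, Ms b c₁ q.1 s * Ds b c₁ q.1 s :=
    continuous_const.mul L4
  have hun : Continuous (Function.uncurry
      (fun (τ : ℝ) v => -2 * ∫ s in v..(1:ℝ), Ms b c₁ τ s * Ds b c₁ τ s)) := by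
    have hequ : Function.uncurry
        (fun (τ : ℝ) v => -2 * ∫ s in v..(1:ℝ), Ms b c₁ τ s * Ds b c₁ τ s)
        = fun q : ℝ × ℝ => -2 * ∫ s in q.2..(1:ℝ), Ms b c₁ q.1 s * Ds b c₁ q.1 s := by
      funext q; rfl
    have hfun : (fun q : ℝ × ℝ => (2:ℝ) * ∫ s in (1:ℝ)..q.2, Ms b c₁ q.1 s * Ds b c₁ q.1 s)
        = fun q : ℝ × ℝ => -2 * ∫ s in q.2..(1:ℝ), Ms b c₁ q.1 s * Ds b c₁ q.1 s := by
      funext q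
      rw [intervalIntegral.integral_symm]
      ring
    rw [hequ, ← hfun]
    exact L4'
  have key := intervalIntegral.continuous_parametric_intervalIntegral_of_continuous'
    (μ := MeasureTheory.volume)
    (f := fun (τ : ℝ) v => -2 * ∫ s in v..(1:ℝ), Ms b c₁ τ s * Ds b c₁ τ s) hun 0 1
  have heq2 : (fun τ : ℝ => Hfun b c₁ τ)
      = fun x : ℝ => ∫ t in (0:ℝ)..(1:ℝ),
          (fun (τ : ℝ) v => -2 * ∫ s in v..(1:ℝ), Ms b c₁ τ s * Ds b c₁ τ s) x t := by
    funext τ; rfl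
  rw [heq2]; exact key

lemma Ms_zero (hb : 0 < b) (s : ℝ) : Ms b c₁ 0 s = 2 * c₁ * (b^2)⁻¹ := by
  unfold Ms
  rw [mul_zero, zero_mul, add_zero, max_eq_right (by linarith : b/2 ≤ b)]

lemma Ds_zero (hb : 0 < b) (u : ℝ) :
    Ds b c₁ 0 u = 2 * c₁ * (b^2)⁻¹ * (u^2/2 - u) := by
  set k : ℝ := 2 * c₁ * (b^2)⁻¹ with hk
  unfold Ds
  have h1 : ∀ v : ℝ, -(∫ s in v..(1:ℝ), Ms b c₁ 0 s) = (-k) + k*v + 0*v^2 + 0*v^3 := by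
    intro v
    simp only [Ms_zero hb, intervalIntegral.integral_const, smul_eq_mul]
    ring
  rw [intervalIntegral.integral_congr (g := fun v => (-k) + k*v + 0*v^2 + 0*v^3)
    (fun v _ => h1 v), poly_int]
  ring

lemma Hfun_zero (hb : 0 < b) : Hfun b c₁ 0 = 5 * c₁^2 / (3 * b^4) := by
  set k : ℝ := 2 * c₁ * (b^2)⁻¹ with hk
  unfold Hfun
  have h1 : ∀ v : ℝ, (-2 : ℝ) * (∫ s in v..(1:ℝ), Ms b c₁ 0 s * Ds b c₁ 0 s)
      = (2*k^2/3) + 0*v + (-(k^2))*v^2 + (k^2/3)*v^3 := by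
    intro v
    have h2 : (∫ s in v..(1:ℝ), Ms b c₁ 0 s * Ds b c₁ 0 s)
        = ∫ s in v..(1:ℝ), (0 + (-(k^2))*s + (k^2/2)*s^2 + 0*s^3) := by
      apply intervalIntegral.integral_congr
      intro s _
      dsimp only
      rw [Ms_zero hb, Ds_zero hb]
      ring
    rw [h2, poly_int]
    ring
  rw [intervalIntegral.integral_congr
    (g := fun v => (2*k^2/3) + 0*v + (-(k^2))*v^2 + (k^2/3)*v^3) (fun v _ => h1 v), poly_int]
  have hb' : (b:ℝ) ≠ 0 := ne_of_gt hb
  field_simp [hk]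
  rw [hk]
  field_simp
  ring

end main

/-- Remark after Theorem 5.2: `lim_{τ→0⁺} A₂(τ)/τ⁴ = 5c₁²/(6b⁴)`
where `A₂(τ) = Γ_τ(1)/2`. -/
theorem tendsto_A2_div_tau_pow_four (b c₁ : ℝ) (hb : 0 < b) (hc₁ : 0 < c₁) :
    Tendsto (fun τ : ℝ => (GammaFn b c₁ τ 1 / 2) / τ ^ 4)
      (𝓝[>] 0) (𝓝 (5 * c₁ ^ 2 / (6 * b ^ 4))) := by
  have hcont : Tendsto (fun τ : ℝ => Hfun b c₁ τ / 2) (𝓝[>] (0:ℝ))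
      (𝓝 (Hfun b c₁ 0 / 2)) :=
    (((Hfun_cont hb).tendsto 0).mono_left nhdsWithin_le_nhds).div_const 2
  have hval : Hfun b c₁ (0:ℝ) / 2 = 5 * c₁ ^ 2 / (6 * b ^ 4) := by
    rw [Hfun_zero hb]; field_simp; ring
  rw [hval] at hcont
  apply hcont.congr'
  filter_upwards [self_mem_nhdsWithin] with τ (hτ : 0 < τ)
  rw [Gamma_eq hτ hc₁ hb]
  field_simp
end

section
/- Let a, b, c > 0 be real constants. Set s = √(c²+4a)/c, p = (−1+s)/2, q = (−1−s)/2, ε = −q·b^q / ( p·b^p·(b+c)^{−s} − q·b^q ), and define φ : [0,1] → ℝ by φ(u) = ε·b^p·(b+cu)^{−p} + (1−ε)·b^q·(b+cu)^{−q} (real powers of positive bases). Then φ(0) = 1, φ'(1) = 0, and φ''(u) = a·(b+cu)^{−2}·φ(u) for all u ∈ [0,1]. -/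
open Real

/-- Proposition C.1: the explicit solution of the boundary value problem
`φ'' = a (b + c u)⁻² φ`, `φ(0) = 1`, `φ'(1) = 0`. -/
theorem explicit_BVP_solution (a b c : ℝ) (ha : 0 < a) (hb : 0 < b) (hc : 0 < c)
    (s p q ε : ℝ)
    (hs : s = Real.sqrt (c ^ 2 + 4 * a) / c)
    (hp : p = (-1 + s) / 2) (hq : q = (-1 - s) / 2)
    (hε : ε = -(q * b ^ q) / (p * b ^ p * (b + c) ^ (-s) - q * b ^ q))
    (φ : ℝ → ℝ)
    (hφ : ∀ u : ℝ, φ u = ε * b ^ p * (b + c * u) ^ (-p)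
        + (1 - ε) * b ^ q * (b + c * u) ^ (-q)) :
    φ 0 = 1 ∧ deriv φ 1 = 0 ∧
      ∀ u ∈ Set.Icc (0:ℝ) 1, deriv (deriv φ) u = a * ((b + c * u) ^ 2)⁻¹ * φ u := by
  -- basic facts about s, p, q
  have hsqrt : c < Real.sqrt (c ^ 2 + 4 * a) := by
    rw [show c ^ 2 + 4 * a = c ^ 2 + 4 * a from rfl]
    have : c = Real.sqrt (c ^ 2) := by rw [Real.sqrt_sq hc.le]
    rw [this]
    exact Real.sqrt_lt_sqrt (by positivity) (by nlinarith)
  have hs1 : 1 < s := by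
    rw [hs, lt_div_iff₀ hc, one_mul]; exact hsqrt
  have hp0 : 0 < p := by rw [hp]; linarith
  have hq0 : q < 0 := by rw [hq]; linarith
  have hbc : (0:ℝ) < b + c := by linarith
  have hs2 : s ^ 2 * c ^ 2 = c ^ 2 + 4 * a := by
    rw [hs, div_pow, Real.sq_sqrt (by positivity)]
    field_simp
  have hpa : c ^ 2 * (p * (p + 1)) = a := by
    rw [hp]; linear_combination hs2 / 4
  have hqa : c ^ 2 * (q * (q + 1)) = a := by
    rw [hq]; linear_combination hs2 / 4
  -- the denominator of ε is positive
  have hbp : (0:ℝ) < b ^ p := Real.rpow_pos_of_pos hb p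
  have hbq : (0:ℝ) < b ^ q := Real.rpow_pos_of_pos hb q
  have hbcs : (0:ℝ) < (b + c) ^ (-s) := Real.rpow_pos_of_pos hbc (-s)
  have hD : p * b ^ p * (b + c) ^ (-s) - q * b ^ q ≠ 0 := by
    have h1 : 0 < p * b ^ p * (b + c) ^ (-s) := by positivity
    have h2 : q * b ^ q < 0 := mul_neg_of_neg_of_pos hq0 hbq
    linarith
  -- derivative of the basic power function
  have key : ∀ (r u : ℝ), 0 < b + c * u →
      HasDerivAt (fun u : ℝ => (b + c * u) ^ r)
        (r * (b + c * u) ^ (r - 1) * c) u := by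
    intro r u hu
    have h1 : HasDerivAt (fun u : ℝ => b + c * u) c u := by
      simpa using ((hasDerivAt_id u).const_mul c).const_add b
    exact (Real.hasDerivAt_rpow_const (Or.inl (ne_of_gt hu))).comp u h1
  set g : ℝ → ℝ := fun u =>
    ε * b ^ p * (-p * (b + c * u) ^ (-p - 1) * c)
      + (1 - ε) * b ^ q * (-q * (b + c * u) ^ (-q - 1) * c) with hg
  set g2 : ℝ → ℝ := fun u =>
    ε * b ^ p * (-p * ((-p - 1) * (b + c * u) ^ (-p - 1 - 1) * c)) * c
      + (1 - ε) * b ^ q * (-q * ((-q - 1) * (b + c * u) ^ (-q - 1 - 1) * c)) * c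
    with hg2
  have hderiv1 : ∀ u : ℝ, 0 < b + c * u → HasDerivAt φ (g u) u := by
    intro u hu
    have hφeq : φ = fun u => ε * b ^ p * (b + c * u) ^ (-p)
        + (1 - ε) * b ^ q * (b + c * u) ^ (-q) := funext hφ
    rw [hφeq]
    exact ((key (-p) u hu).const_mul (ε * b ^ p)).add
      ((key (-q) u hu).const_mul ((1 - ε) * b ^ q))
  have hderiv2 : ∀ u : ℝ, 0 < b + c * u → HasDerivAt g (g2 u) u := by
    intro u hu
    have h1 := (((key (-p - 1) u hu).const_mul (-p)).const_mul (ε * b ^ p))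
    have h2 := (((key (-q - 1) u hu).const_mul (-q)).const_mul ((1 - ε) * b ^ q))
    have h := (h1.mul_const c).add (h2.mul_const c)
    have hgeq : g = fun x => ε * b ^ p * (-p * (b + c * x) ^ (-p - 1)) * c
        + (1 - ε) * b ^ q * (-q * (b + c * x) ^ (-q - 1)) * c := by
      funext v; simp only [hg]; ring
    rw [hgeq]
    exact h
  have hopen : IsOpen {u : ℝ | 0 < b + c * u} :=
    isOpen_lt continuous_const (by fun_prop)
  refine ⟨?_, ?_, ?_⟩
  · -- φ 0 = 1
    rw [hφ 0, mul_zero, add_zero, Real.rpow_neg hb.le, Real.rpow_neg hb.le]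
    field_simp
    ring
  · -- deriv φ 1 = 0
    have hu1 : (0:ℝ) < b + c * 1 := by linarith
    rw [(hderiv1 1 hu1).deriv]
    have hb1 : b + c * 1 = b + c := by ring
    simp only [hg, hb1]
    have hrs : (b + c) ^ (-p - 1) = (b + c) ^ (-s) * (b + c) ^ (-q - 1) := by
      rw [← Real.rpow_add hbc]
      congr 1
      rw [hp, hq]; ring
    rw [hrs, hε]
    field_simp
    ring
  · -- second derivative
    intro u hu
    obtain ⟨hu0, hu1⟩ := hu
    have hx : 0 < b + c * u := by nlinarith
    have hev : deriv φ =ᶠ[nhds u] g :=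
      Filter.eventuallyEq_of_mem (hopen.mem_nhds hx)
        (fun v hv => (hderiv1 v hv).deriv)
    rw [hev.deriv_eq, (hderiv2 u hx).deriv]
    simp only [hg2, hφ u]
    have e2 : (b + c * u) ^ (-2:ℝ) = ((b + c * u) ^ 2)⁻¹ := by
      rw [Real.rpow_neg hx.le, Real.rpow_two]
    have e1 : (b + c * u) ^ (-p - 1 - 1) = (b + c * u) ^ (-p) * ((b + c * u) ^ 2)⁻¹ := by
      rw [show (-p - 1 - 1 : ℝ) = -p + -2 by ring, Real.rpow_add hx, e2]
    have e1' : (b + c * u) ^ (-q - 1 - 1) = (b + c * u) ^ (-q) * ((b + c * u) ^ 2)⁻¹ := by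
      rw [show (-q - 1 - 1 : ℝ) = -q + -2 by ring, Real.rpow_add hx, e2]
    rw [e1, e1']
    linear_combination (ε * b ^ p * (b + c * u) ^ (-p) * (((b + c * u)) ^ 2)⁻¹) * hpa
      + ((1 - ε) * b ^ q * (b + c * u) ^ (-q) * (((b + c * u)) ^ 2)⁻¹) * hqa
end

section
/- Let a, b, c > 0 be real constants. Set s = √(c²+4a)/c, p = (−1+s)/2, q = (−1−s)/2, ε = −q·b^q / ( p·b^p·(b+c)^{−s} − q·b^q ), and define φ : [0,1] → ℝ by φ(u) = ε·b^p·(b+cu)^{−p} + (1−ε)·b^q·(b+cu)^{−q}. Then φ'(0) = −( a/(bc) )·( b^q − b^p·(b+c)^{−s} ) / ( p·b^p·(b+c)^{−s} − q·b^q ). -/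
open Real

/-- Corollary C.2, first formula: the derivative at 0 of the explicit solution
of `φ'' = a (b + c u)⁻² φ`, `φ(0) = 1`, `φ'(1) = 0`. -/
theorem explicit_BVP_solution_deriv_at_zero
    (a b c : ℝ) (ha : 0 < a) (hb : 0 < b) (hc : 0 < c)
    (s p q ε : ℝ)
    (hs : s = Real.sqrt (c ^ 2 + 4 * a) / c)
    (hp : p = (-1 + s) / 2) (hq : q = (-1 - s) / 2)
    (hε : ε = -(q * b ^ q) / (p * b ^ p * (b + c) ^ (-s) - q * b ^ q))
    (φ : ℝ → ℝ)
    (hφ : ∀ u : ℝ, φ u = ε * b ^ p * (b + c * u) ^ (-p)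
        + (1 - ε) * b ^ q * (b + c * u) ^ (-q)) :
    deriv φ 0 = -(a / (b * c)) * (b ^ q - b ^ p * (b + c) ^ (-s))
        / (p * b ^ p * (b + c) ^ (-s) - q * b ^ q) := by
  have hs1 : 1 < s := by
    rw [hs, lt_div_iff₀ hc, one_mul]
    have : c = Real.sqrt (c ^ 2) := by
      rw [Real.sqrt_sq hc.le]
    nth_rewrite 1 [this]
    exact Real.sqrt_lt_sqrt (by positivity) (by nlinarith)
  have hp0 : 0 < p := by rw [hp]; linarith
  have hq0 : q < 0 := by rw [hq]; linarith
  have hs2 : s ^ 2 * c ^ 2 = c ^ 2 + 4 * a := by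
    rw [hs, div_pow, div_mul_cancel₀ _ (by positivity),
      Real.sq_sqrt (by positivity)]
  have hpq : p * q * c ^ 2 = -a := by
    rw [hp, hq]; nlinarith [hs2]
  -- derivative
  have h1 : HasDerivAt (fun u : ℝ => b + c * u) c 0 := by
    simpa using ((hasDerivAt_id (0:ℝ)).const_mul c).const_add b
  have hb0 : b + c * 0 ≠ 0 := by simp; positivity
  have h2 : HasDerivAt (fun u : ℝ => (b + c * u) ^ (-p))
      (c * (-p) * b ^ (-p - 1)) 0 := by
    have := h1.rpow_const (p := -p) (Or.inl hb0); simpa using this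
  have h3 : HasDerivAt (fun u : ℝ => (b + c * u) ^ (-q))
      (c * (-q) * b ^ (-q - 1)) 0 := by
    have := h1.rpow_const (p := -q) (Or.inl hb0); simpa using this
  have hφd : HasDerivAt φ
      (ε * b ^ p * (c * (-p) * b ^ (-p - 1))
        + (1 - ε) * b ^ q * (c * (-q) * b ^ (-q - 1))) 0 := by
    have : φ = fun u => ε * b ^ p * (b + c * u) ^ (-p)
        + (1 - ε) * b ^ q * (b + c * u) ^ (-q) := funext hφ
    rw [this]
    exact ((h2.const_mul _).add (h3.const_mul _))
  rw [hφd.deriv]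
  -- algebra
  have e1 : b ^ p * b ^ (-p - 1) = b⁻¹ := by
    rw [← Real.rpow_add hb, show p + (-p - 1) = -1 by ring, Real.rpow_neg_one]
  have e2 : b ^ q * b ^ (-q - 1) = b⁻¹ := by
    rw [← Real.rpow_add hb, show q + (-q - 1) = -1 by ring, Real.rpow_neg_one]
  have hC : (0:ℝ) < (b + c) ^ (-s) := Real.rpow_pos_of_pos (by linarith) _
  have hBp : (0:ℝ) < b ^ p := Real.rpow_pos_of_pos hb _
  have hBq : (0:ℝ) < b ^ q := Real.rpow_pos_of_pos hb _
  have hD0 : 0 < p * b ^ p * (b + c) ^ (-s) - q * b ^ q := by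
    have t1 : 0 < p * b ^ p * (b + c) ^ (-s) := by positivity
    have t2 : q * b ^ q < 0 := mul_neg_of_neg_of_pos hq0 hBq
    linarith
  have hD : p * b ^ p * (b + c) ^ (-s) - q * b ^ q ≠ 0 := ne_of_gt hD0
  have key : ε * b ^ p * (c * -p * b ^ (-p - 1))
      + (1 - ε) * b ^ q * (c * -q * b ^ (-q - 1))
      = c * b⁻¹ * (ε * (-p) + (1 - ε) * (-q)) := by
    have t1 : ε * b ^ p * (c * -p * b ^ (-p - 1))
        = c * (ε * (-p)) * (b ^ p * b ^ (-p - 1)) := by ring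
    have t2 : (1 - ε) * b ^ q * (c * -q * b ^ (-q - 1))
        = c * ((1 - ε) * (-q)) * (b ^ q * b ^ (-q - 1)) := by ring
    rw [t1, t2, e1, e2]; ring
  rw [key, hε]
  field_simp
  linear_combination (b ^ q - b ^ p * (b + c) ^ (-s)) * hpq
end
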